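/- For the total-degree index set I(l) = {β ∈ ℕ_0^d : max(0, l - d + 1) ≤ ‖β‖_1 ≤ l} extended to I'(l) = {β : ‖β‖_1 ≤ l}, the combination coefficient formula c_β = Σ_{j ∈ {0,1}^d} (-1)^{‖j‖_1} χ_{I'(l)}(β + j) evaluates to c_β = (-1)^{l - ‖β‖_1} C(d - 1, l - ‖β‖_1) when l - d + 1 ≤ ‖β‖_1 ≤ l, and c_β = 0 when ‖β‖_1 < l - d + 1. -/

import Mathlib

open Finset

lemma smolyak_aux (d : ℕ) (hd : 1 ≤ d) : ∀ s l : ℕ,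
    (∑ j : Fin d → Fin 2, ((-1 : ℤ) ^ (∑ i, (j i : ℕ))) *
      (if s + ∑ i, (j i : ℕ) ≤ l then 1 else 0))
    = if s ≤ l then (-1 : ℤ) ^ (l - s) * ((d - 1).choose (l - s) : ℤ) else 0 := by
  induction d, hd using Nat.le_induction with
  | base =>
    intro s l
    rw [Fintype.sum_equiv (Equiv.funUnique (Fin 1) (Fin 2))
        (fun j : Fin 1 → Fin 2 => ((-1 : ℤ) ^ (∑ i, (j i : ℕ))) *
          (if s + ∑ i, (j i : ℕ) ≤ l then 1 else 0))
        (fun x : Fin 2 => ((-1 : ℤ) ^ (x : ℕ)) * (if s + (x : ℕ) ≤ l then 1 else 0))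
        (by intro j; simp [Fin.sum_univ_one])]
    rw [Fin.sum_univ_two]
    simp only [Fin.val_zero, Fin.val_one, pow_zero, pow_one]
    rcases lt_trichotomy s l with h | h | h
    · rw [if_pos (by omega : s + 0 ≤ l), if_pos (by omega : s + 1 ≤ l),
        if_pos (le_of_lt h)]
      simp [Nat.choose_eq_zero_of_lt (by omega : 0 < l - s)]
    · subst h
      simp
    · rw [if_neg (by omega), if_neg (by omega), if_neg (by omega)]
      ring
  | succ d hd ih =>
    intro s l
    rw [Fintype.sum_equiv (Fin.consEquiv (fun _ : Fin (d+1) => Fin 2)).symm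
        (fun j : Fin (d+1) → Fin 2 => ((-1 : ℤ) ^ (∑ i, (j i : ℕ))) *
          (if s + ∑ i, (j i : ℕ) ≤ l then 1 else 0))
        (fun p : Fin 2 × (Fin d → Fin 2) =>
          ((-1 : ℤ) ^ ((p.1 : ℕ) + ∑ i, (p.2 i : ℕ))) *
            (if s + ((p.1 : ℕ) + ∑ i, (p.2 i : ℕ)) ≤ l then 1 else 0))
        (by
          intro j
          simp only [mul_ite, mul_one, mul_zero]
          split_ifs <;> simp_all [Fin.consEquiv, Fin.sum_univ_succ, Fin.tail] <;> omega)]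
    rw [Fintype.sum_prod_type, Fin.sum_univ_two]
    simp only [Fin.val_zero, Fin.val_one, zero_add]
    have h2' : ∀ j : Fin d → Fin 2, ((-1 : ℤ) ^ (1 + ∑ i, (j i : ℕ))) *
        (if s + (1 + ∑ i, (j i : ℕ)) ≤ l then 1 else 0)
        = -(((-1 : ℤ) ^ (∑ i, (j i : ℕ))) *
          (if (s + 1) + ∑ i, (j i : ℕ) ≤ l then 1 else 0)) := by
      intro j
      have h : s + (1 + ∑ i, (j i : ℕ)) = (s + 1) + ∑ i, (j i : ℕ) := by ring
      rw [h, pow_add, pow_one]; ring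
    calc (∑ j : Fin d → Fin 2, ((-1 : ℤ) ^ (∑ i, (j i : ℕ))) *
          (if s + ∑ i, (j i : ℕ) ≤ l then 1 else 0))
        + ∑ j : Fin d → Fin 2, ((-1 : ℤ) ^ (1 + ∑ i, (j i : ℕ))) *
          (if s + (1 + ∑ i, (j i : ℕ)) ≤ l then 1 else 0)
        = (if s ≤ l then (-1 : ℤ) ^ (l - s) * ((d - 1).choose (l - s) : ℤ) else 0)
          - (if s + 1 ≤ l then
              (-1 : ℤ) ^ (l - (s+1)) * ((d - 1).choose (l - (s+1)) : ℤ) else 0) := by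
          rw [Finset.sum_congr rfl (fun j _ => h2' j), Finset.sum_neg_distrib,
            ih s l, ih (s+1) l]
          ring
      _ = if s ≤ l then (-1 : ℤ) ^ (l - s) * ((d + 1 - 1).choose (l - s) : ℤ)
            else 0 := by
          rcases lt_trichotomy s l with h | h | h
          · rw [if_pos (le_of_lt h), if_pos (by omega : s + 1 ≤ l),
              if_pos (le_of_lt h)]
            have hls : l - s = (l - (s+1)) + 1 := by omega
            have hd1 : d = (d - 1) + 1 := by omega
            have key : d.choose (l - s)
                = (d-1).choose (l - (s+1)) + (d-1).choose (l - (s+1) + 1) := by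
              conv_lhs => rw [hd1, hls]
              exact Nat.choose_succ_succ _ _
            have key' : ((d + 1 - 1).choose (l - s) : ℤ)
                = ((d-1).choose (l - (s+1)) : ℤ) + ((d-1).choose (l - s) : ℤ) := by
              rw [Nat.add_sub_cancel, key, ← hls]; push_cast; ring
            rw [key', hls]
            ring
          · subst h
            rw [if_pos le_rfl, if_neg (by omega), if_pos le_rfl]
            simp
          · rw [if_neg (by omega), if_neg (by omega), if_neg (by omega)]
            ring

/-- Combination coefficient formula for the total-degree index set
`I'(l) = {β : ‖β‖₁ ≤ l}`: the coefficient
`c β = ∑_{j ∈ {0,1}^d} (-1)^{‖j‖₁} χ_{I'(l)}(β + j)` equals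
`(-1)^{l - ‖β‖₁} C(d-1, l - ‖β‖₁)` when `l - d + 1 ≤ ‖β‖₁ ≤ l`, and `0` when
`‖β‖₁ + d ≤ l` (i.e. `‖β‖₁ < l - d + 1`). -/
theorem smolyak_total_degree_coefficient (d l : ℕ) (hd : 1 ≤ d)
    (β : Fin d → ℕ) (hβ : ∑ i, β i ≤ l)
    (c : ℤ)
    (hc : c = ∑ j : Fin d → Fin 2,
        ((-1 : ℤ) ^ (∑ i, (j i : ℕ))) *
          (if (∑ i, (β i + (j i : ℕ))) ≤ l then 1 else 0)) :
    (l < ∑ i, β i + d →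
      c = (-1 : ℤ) ^ (l - ∑ i, β i) * ((d - 1).choose (l - ∑ i, β i) : ℤ)) ∧
    (∑ i, β i + d ≤ l → c = 0) := by
  have hsum : ∀ j : Fin d → Fin 2,
      (∑ i, (β i + (j i : ℕ))) = (∑ i, β i) + ∑ i, (j i : ℕ) := by
    intro j; rw [Finset.sum_add_distrib]
  have hc' : c = if (∑ i, β i) ≤ l then
      (-1 : ℤ) ^ (l - ∑ i, β i) * ((d - 1).choose (l - ∑ i, β i) : ℤ) else 0 := by
    rw [hc, ← smolyak_aux d hd (∑ i, β i) l]
    exact Finset.sum_congr rfl (fun j _ => by rw [hsum j])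
  rw [hc', if_pos hβ]
  constructor
  · intro _; rfl
  · intro h
    have hz : (d - 1).choose (l - ∑ i, β i) = 0 := by
      apply Nat.choose_eq_zero_of_lt
      revert h hd
      clear hc hc' hsum hβ c
      generalize (∑ i, β i) = S
      intro hd h
      omega
    rw [hz]
    simp
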